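/- Let b ≥ 2, d an integer with 1 < d < b^{N/3}, ℓ ∈ ℤ such that b^i ℓ/d ∉ ℤ for all i ≥ 1, and |ε| < 1/(2 b^{2N/3}). Suppose the digit set 𝒜 contains two consecutive integers. Then |Ĉ_{b^N}(ℓ/d + ε)| ≤ (b−s)^N · exp(−cN/log d) for a constant c > 0 depending only on b. -/

import Mathlib

open Finset

/-- The standard complex exponential `e(x) = exp(2πix)`. -/
noncomputable def e (x : ℝ) : ℂ := Complex.exp (2 * (Real.pi : ℂ) * Complex.I * (x : ℂ))

/-- Distance from a real number to the nearest integer. -/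
noncomputable def nint (x : ℝ) : ℝ := |x - round x|

/-- Fourier transform of the indicator of integers `n < b^N` all of whose
base-`b` digits lie in `A`. -/
noncomputable def Chat (b : ℕ) (A : Finset ℕ) (N : ℕ) (x : ℝ) : ℂ :=
  ∑ n ∈ (Finset.range (b ^ N)).filter (fun n => ∀ i < N, n / b ^ i % b ∈ A), e (n * x)

/-- The excluded digit set `{0,...,b-1} \ A` is a disjoint union of `k`
(nonempty) intervals of integers. -/
def ExcludedUnionIntervals (b k : ℕ) (A : Finset ℕ) : Prop :=
  ∃ l r : Fin k → ℕ, (∀ i, l i ≤ r i) ∧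
    (∀ i j, i ≠ j → Disjoint (Finset.Icc (l i) (r i)) (Finset.Icc (l j) (r j))) ∧
    Finset.range b \ A = Finset.univ.biUnion (fun i => Finset.Icc (l i) (r i))

/-! ### Auxiliary lemmas -/

lemma nint_nonneg (x : ℝ) : 0 ≤ nint x := abs_nonneg _
lemma nint_le_half (x : ℝ) : nint x ≤ 1/2 := abs_sub_round x
lemma nint_le_int (x : ℝ) (m : ℤ) : nint x ≤ |x - m| := round_le x m

lemma nint_add_ge (x y : ℝ) : nint x - |y| ≤ nint (x + y) := by
  have h := nint_le_int x (round (x+y))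
  have h2 : |x - (round (x+y) : ℤ)| ≤ |x + y - round (x+y)| + |y| := by
    calc |x - (round (x+y) : ℤ)| = |(x + y - round (x+y)) + (-y)| := by congr 1; ring
    _ ≤ _ := by simpa using abs_add_le (x + y - round (x+y)) (-y)
  have h3 : nint (x + y) = |x + y - round (x+y)| := rfl
  linarith

lemma nint_int_div {d : ℤ} (hd : 0 < d) {m : ℤ} (h : ¬ d ∣ m) : (1:ℝ)/d ≤ nint ((m:ℝ)/d) := by
  set k := round ((m:ℝ)/(d:ℝ)) with hk
  have hd0 : (0:ℝ) < d := by exact_mod_cast hd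
  have hne : m - k * d ≠ 0 := by
    intro hc; apply h; exact ⟨k, by linear_combination hc⟩
  have h1 : (1:ℤ) ≤ |m - k * d| := Int.one_le_abs hne
  have e1 : (m:ℝ)/d - k = ((m - k*d : ℤ) : ℝ)/d := by push_cast; field_simp
  show (1:ℝ)/d ≤ |(m:ℝ)/d - k|
  rw [e1, abs_div, abs_of_pos hd0]
  apply (div_le_div_iff_of_pos_right hd0).mpr
  rw [← Int.cast_abs]; exact_mod_cast h1

lemma round_eq_of_abs_lt {x : ℝ} {m : ℤ} (h : |x - m| < 1/2) : round x = m := by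
  rw [round_eq, Int.floor_eq_iff]
  have := abs_lt.1 h
  constructor <;> [push_cast; push_cast] <;> linarith [this.1, this.2]

lemma nint_base_mul {b : ℕ} (hb : 2 ≤ b) {x : ℝ} (h : nint x < 1/(2*b)) :
    nint ((b:ℝ)*x) = b * nint x := by
  have hb0 : (0:ℝ) < b := by positivity
  set k := round x with hk
  have hr : |x - k| < 1/(2*b) := h
  have h2 : |(b:ℝ)*x - ((b*k : ℤ) : ℝ)| < 1/2 := by
    push_cast
    rw [show (b:ℝ)*x - b*k = b*(x-k) by ring, abs_mul, abs_of_pos hb0]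
    calc (b:ℝ)*|x-k| < b*(1/(2*b)) := by gcongr
    _ = 1/2 := by field_simp; try ring
  show |(b:ℝ)*x - round ((b:ℝ)*x)| = b * |x - k|
  rw [round_eq_of_abs_lt h2]
  push_cast
  rw [show (b:ℝ)*x - b*k = b*(x-k) by ring, abs_mul, abs_of_pos hb0]

lemma window_lemma (b d : ℕ) (hb : 2 ≤ b) (hd : 1 < d) (ℓ : ℤ) (L : ℕ) (hL1 : 1 ≤ L)
    (hLd : d ≤ b ^ L)
    (hnd : ∀ i : ℕ, ¬ (d:ℤ) ∣ (b:ℤ) ^ i * ℓ) (i0 : ℕ) :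
    ∃ j < L, 1/(2*(b:ℝ)) ≤ nint ((b:ℝ)^(i0+j) * ℓ / d) := by
  by_contra hcon
  push_neg at hcon
  have key : ∀ j, j < L → nint ((b:ℝ)^(i0+j) * ℓ / d) = (b:ℝ)^j * nint ((b:ℝ)^i0 * ℓ / d) := by
    intro j
    induction j with
    | zero => intro _; simp
    | succ j ih =>
      intro hj
      have hj' : j < L := Nat.lt_of_succ_lt hj
      have h1 := hcon j hj'
      have e2 : (b:ℝ)^(i0+(j+1)) * ℓ / d = b * ((b:ℝ)^(i0+j) * ℓ / d) := by
        rw [← Nat.add_assoc, pow_succ]; ring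
      rw [e2, nint_base_mul hb h1, ih hj', pow_succ]; ring
  have hL' : L - 1 < L := by omega
  have h1 := hcon (L-1) hL'
  rw [key (L-1) hL'] at h1
  have hd0 : (0:ℝ) < d := by positivity
  have h2 : (1:ℝ)/d ≤ nint ((b:ℝ)^i0 * ℓ / d) := by
    have h3 := nint_int_div (show (0:ℤ) < d by exact_mod_cast Nat.zero_lt_of_lt hd) (hnd i0)
    convert h3 using 2 <;> push_cast <;> ring
  have hb0 : (0:ℝ) < b := by positivity
  have hP : (0:ℝ) < (b:ℝ)^(L-1) := by positivity
  have h4 : (d:ℝ) ≤ b * (b:ℝ)^(L-1) := by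
    have : (d:ℕ) ≤ b * b^(L-1) := by
      calc d ≤ b^L := hLd
      _ = b * b^(L-1) := by conv_lhs => rw [show L = (L-1)+1 by omega, pow_succ, Nat.mul_comm]
    exact_mod_cast this
  set n0 := nint ((b:ℝ)^i0 * ℓ / d)
  have h5 : (b:ℝ)^(L-1) * (1/d) ≤ (b:ℝ)^(L-1) * n0 := by gcongr
  have hb2 : (2:ℝ) ≤ b := by exact_mod_cast hb
  have h6 : (1:ℝ)/b ≤ (b:ℝ)^(L-1) * (1/d) := by
    rw [mul_one_div, div_le_div_iff₀ hb0 hd0]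
    nlinarith
  have h7 : 1/(2*(b:ℝ)) < 1/b := by
    rw [div_lt_div_iff₀ (by positivity) hb0]; nlinarith
  linarith

lemma e_add (x y : ℝ) : e (x + y) = e x * e y := by
  unfold e; rw [← Complex.exp_add]; push_cast; ring_nf

lemma e_abs (x : ℝ) : ‖e x‖ = 1 := by
  unfold e
  rw [Complex.norm_exp]
  norm_num [Complex.mul_re, Complex.mul_im]

lemma chat_prod (b : ℕ) (hb : 2 ≤ b) (A : Finset ℕ) (hA : A ⊆ Finset.range b) :
    ∀ (N : ℕ) (x : ℝ), Chat b A N x = ∏ i ∈ Finset.range N, ∑ a ∈ A, e ((a : ℝ) * ((b:ℝ)^i * x)) := by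
  intro N
  induction N with
  | zero =>
    intro x
    unfold Chat
    simp [e]
  | succ N ih =>
    intro x
    have hb0 : 0 < b := by omega
    have key : Chat b A (N+1) x = (∑ a ∈ A, e ((a:ℝ) * x)) * Chat b A N ((b:ℝ) * x) := by
      unfold Chat
      rw [Finset.sum_mul_sum]
      rw [← Finset.sum_product']
      apply Finset.sum_nbij' (fun n => (n % b, n / b)) (fun p => p.1 + b * p.2)
      · intro n hn
        simp only [Finset.mem_filter, Finset.mem_range] at hn
        obtain ⟨hlt, hdig⟩ := hn
        simp only [Finset.mem_product, Finset.mem_filter, Finset.mem_range]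
        refine ⟨?_, ?_, ?_⟩
        · have := hdig 0 (by omega); simpa using this
        · rw [pow_succ] at hlt
          exact Nat.div_lt_of_lt_mul (by rwa [Nat.mul_comm] at hlt)
        · intro i hi
          have := hdig (i+1) (by omega)
          rwa [pow_succ, Nat.mul_comm (b^i) b, ← Nat.div_div_eq_div_mul] at this
      · intro p hp
        simp only [Finset.mem_product, Finset.mem_filter, Finset.mem_range] at hp
        obtain ⟨ha, hm, hdig⟩ := hp
        have hab : p.1 < b := Finset.mem_range.mp (hA ha)
        simp only [Finset.mem_filter, Finset.mem_range]
        constructor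
        · rw [pow_succ]
          calc p.1 + b * p.2 < b + b * p.2 := by omega
          _ ≤ b * b ^ N := by
            rw [show b + b*p.2 = b*(p.2+1) by ring]
            exact Nat.mul_le_mul_left b (by omega)
          _ = b ^ N * b := Nat.mul_comm _ _
        · intro i hi
          match i with
          | 0 =>
            simpa [Nat.add_mul_mod_self_left, Nat.mod_eq_of_lt hab] using ha
          | Nat.succ j =>
            have h1 : (p.1 + b * p.2) / b = p.2 := by
              rw [Nat.add_mul_div_left _ _ hb0, Nat.div_eq_of_lt hab]; omega
            rw [pow_succ, Nat.mul_comm (b^j) b, ← Nat.div_div_eq_div_mul, h1]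
            exact hdig j (by omega)
      · intro n _; exact Nat.mod_add_div n b
      · intro p hp
        simp only [Finset.mem_product, Finset.mem_filter, Finset.mem_range] at hp
        have hab : p.1 < b := Finset.mem_range.mp (hA hp.1)
        have h1 : (p.1 + b * p.2) % b = p.1 := by
          rw [Nat.add_mul_mod_self_left, Nat.mod_eq_of_lt hab]
        have h2 : (p.1 + b * p.2) / b = p.2 := by
          rw [Nat.add_mul_div_left _ _ hb0, Nat.div_eq_of_lt hab]; omega
        ext <;> simp [h1, h2]
      · intro n hn
        have h3 : ((n : ℝ)) * x = (n % b : ℕ) * x + ((n / b : ℕ) : ℝ) * ((b:ℝ) * x) := by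
          have hn' : (n % b) + b * (n / b) = n := Nat.mod_add_div n b
          have h4 : ((n:ℝ)) = ((n % b : ℕ):ℝ) + (b:ℝ) * ((n/b : ℕ):ℝ) := by
            exact_mod_cast congrArg (Nat.cast : ℕ → ℝ) hn'.symm
          rw [h4]; ring
        rw [h3, e_add]
    rw [key, ih, Finset.prod_range_succ']
    rw [mul_comm]
    congr 1
    · apply Finset.prod_congr rfl
      intro i _
      apply Finset.sum_congr rfl
      intro a _
      congr 1
      rw [pow_succ]; ring
    · simp

lemma cos_pi_bound {u : ℝ} (h0 : 0 ≤ u) (h1 : u ≤ 1/2) :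
    Real.cos (Real.pi * u) ≤ 1 - 2*u^2 := by
  have hpi := Real.pi_pos
  have ht0 : 0 ≤ Real.pi * u / 2 := by positivity
  have ht1 : Real.pi * u / 2 ≤ Real.pi / 2 := by nlinarith
  have hs : u ≤ Real.sin (Real.pi * u / 2) := by
    have h2 := Real.mul_le_sin ht0 ht1
    calc u = 2 / Real.pi * (Real.pi * u / 2) := by field_simp
    _ ≤ _ := h2
  have h2 : Real.cos (Real.pi * u) = 1 - 2 * Real.sin (Real.pi * u / 2) ^ 2 := by
    rw [show Real.pi * u = 2 * (Real.pi * u / 2) by ring, Real.cos_two_mul, Real.cos_sq']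
    ring
  nlinarith

lemma abs_cos_pi_le (y : ℝ) : |Real.cos (Real.pi * y)| ≤ Real.cos (Real.pi * nint y) := by
  set k := round y with hk
  set r := y - k with hr
  have h1 : Real.cos (Real.pi * y) = Real.cos (Real.pi * r) * Real.cos (k * Real.pi)
      - Real.sin (Real.pi * r) * Real.sin (k * Real.pi) := by
    rw [← Real.cos_add]; congr 1; ring
  have h2 : Real.sin ((k:ℝ) * Real.pi) = 0 := Real.sin_int_mul_pi k
  have h3 : |Real.cos (Real.pi * y)| ≤ |Real.cos (Real.pi * r)| := by
    rw [h1, h2, mul_zero, sub_zero, abs_mul]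
    calc |Real.cos (Real.pi * r)| * |Real.cos ((k:ℝ) * Real.pi)|
        ≤ |Real.cos (Real.pi * r)| * 1 := by
          gcongr; exact Real.abs_cos_le_one _
    _ = _ := mul_one _
  have h4 : |Real.cos (Real.pi * r)| = Real.cos (Real.pi * |r|) := by
    have hrr : |r| ≤ 1/2 := abs_sub_round y
    rcases abs_le.1 hrr with ⟨hl, hu⟩
    have hpi := Real.pi_pos
    rcases abs_cases r with ⟨hc, _⟩ | ⟨hc, _⟩
    · rw [hc]
      apply abs_of_nonneg
      apply Real.cos_nonneg_of_mem_Icc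
      constructor <;> nlinarith
    · rw [hc, show Real.pi * -r = -(Real.pi * r) by ring, Real.cos_neg]
      apply abs_of_nonneg
      apply Real.cos_nonneg_of_mem_Icc
      constructor <;> nlinarith
  have h5 : nint y = |r| := rfl
  rw [h5, ← h4]; exact h3

lemma abs_one_add_e (y : ℝ) : ‖1 + e y‖ = 2 * |Real.cos (Real.pi * y)| := by
  have he : e y = Complex.ofReal (Real.cos (2*Real.pi*y)) + Complex.ofReal (Real.sin (2*Real.pi*y)) * Complex.I := by
    unfold e
    rw [show 2 * (Real.pi:ℂ) * Complex.I * (y:ℂ) = ((2*Real.pi*y : ℝ):ℂ) * Complex.I by push_cast; ring]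
    rw [Complex.exp_mul_I]
    rw [← Complex.ofReal_cos, ← Complex.ofReal_sin]
  rw [he, show (1:ℂ) + (Complex.ofReal (Real.cos (2*Real.pi*y)) + Complex.ofReal (Real.sin (2*Real.pi*y)) * Complex.I)
      = Complex.ofReal (1 + Real.cos (2*Real.pi*y)) + Complex.ofReal (Real.sin (2*Real.pi*y)) * Complex.I by push_cast; ring]
  rw [Complex.norm_def, Complex.normSq_add_mul_I]
  have h1 : (1 + Real.cos (2*Real.pi*y)) ^ 2 + Real.sin (2*Real.pi*y) ^ 2
      = (2 * Real.cos (Real.pi * y)) ^ 2 := by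
    have hc2 : Real.cos (2*Real.pi*y) = 2 * Real.cos (Real.pi*y)^2 - 1 := by
      rw [show 2*Real.pi*y = 2*(Real.pi*y) by ring, Real.cos_two_mul]
    have hs2 : Real.sin (2*Real.pi*y) ^ 2 = 1 - Real.cos (2*Real.pi*y) ^ 2 := Real.sin_sq _
    rw [hs2, hc2]; ring
  rw [h1, Real.sqrt_sq_eq_abs, abs_mul]
  norm_num

lemma factor_bound (b : ℕ) (hb : 2 ≤ b) (A : Finset ℕ) (hA : A.card ≤ b)
    (a0 : ℕ) (h0 : a0 ∈ A) (h1 : a0 + 1 ∈ A) (y : ℝ) :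
    ‖∑ a ∈ A, e ((a:ℝ) * y)‖ ≤ (A.card : ℝ) * Real.exp (-(4 / b) * nint y ^ 2) := by
  have hpair : ({a0, a0+1} : Finset ℕ) ⊆ A := by
    intro z hz; simp only [Finset.mem_insert, Finset.mem_singleton] at hz
    rcases hz with h | h <;> subst h <;> assumption
  have hpaircard : ({a0, a0+1} : Finset ℕ).card = 2 := by
    rw [Finset.card_insert_of_notMem (by simp), Finset.card_singleton]
  have hcard2 : 2 ≤ A.card := by
    calc 2 = ({a0, a0+1} : Finset ℕ).card := hpaircard.symm
    _ ≤ A.card := Finset.card_le_card hpair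
  set u := nint y with hu
  have hu0 : 0 ≤ u := nint_nonneg y
  have hu1 : u ≤ 1/2 := nint_le_half y
  rw [← Finset.sum_sdiff hpair]
  have hstep1 : ‖∑ a ∈ A \ {a0, a0+1}, e ((a:ℝ)*y) + ∑ a ∈ ({a0, a0+1} : Finset ℕ), e ((a:ℝ)*y)‖
      ≤ ((A.card : ℝ) - 2) + 2 * |Real.cos (Real.pi * y)| := by
    apply le_trans (norm_add_le _ _)
    gcongr
    · calc ‖∑ a ∈ A \ {a0, a0+1}, e ((a:ℝ)*y)‖
          ≤ ∑ a ∈ A \ {a0, a0+1}, ‖e ((a:ℝ)*y)‖ := by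
            exact norm_sum_le _ _
      _ = (A \ {a0, a0+1}).card := by
            rw [Finset.sum_congr rfl (fun a _ => e_abs _)]; simp
      _ = (A.card : ℝ) - 2 := by
            rw [Finset.card_sdiff_of_subset hpair, hpaircard]
            push_cast [Nat.cast_sub hcard2]
            ring
    · have hsum2 : ∑ a ∈ ({a0, a0+1} : Finset ℕ), e ((a:ℝ)*y) = e ((a0:ℝ)*y) * (1 + e y) := by
        rw [Finset.sum_pair (by omega)]
        have h5 : ((a0+1 : ℕ):ℝ) * y = (a0:ℝ)*y + y := by push_cast; ring
        rw [h5, e_add]; ring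
      rw [hsum2, norm_mul, e_abs, one_mul, abs_one_add_e]
  apply le_trans hstep1
  have hcos : |Real.cos (Real.pi * y)| ≤ 1 - 2*u^2 :=
    le_trans (abs_cos_pi_le y) (cos_pi_bound hu0 hu1)
  have hb0 : (0:ℝ) < b := by positivity
  have hcard0 : (0:ℝ) ≤ A.card := by positivity
  have hexp : 1 - (4/b)*u^2 ≤ Real.exp (-(4/b) * u^2) := by
    have := Real.add_one_le_exp (-(4/b) * u^2)
    linarith
  have hcb : (A.card : ℝ) ≤ b := by exact_mod_cast hA
  have hcard2' : (2:ℝ) ≤ A.card := by exact_mod_cast hcard2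
  have hu4 : u^2 ≤ 1/4 := by nlinarith
  have h4u : 4 * u^2 ≤ (A.card:ℝ) := by linarith
  calc ((A.card : ℝ) - 2) + 2 * |Real.cos (Real.pi * y)|
      ≤ ((A.card : ℝ) - 2) + 2 * (1 - 2*u^2) := by linarith
  _ = (A.card:ℝ) - 4*u^2 := by ring
  _ ≤ A.card * (1 - (4/b)*u^2) := by
      rw [mul_sub, mul_one]
      have h6 : (A.card : ℝ) * ((4/b)*u^2) ≤ 4*u^2 := by
        rw [show (A.card : ℝ) * ((4/b)*u^2) = (A.card/b) * (4*u^2) by ring]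
        have hle : (A.card : ℝ)/b ≤ 1 := by rw [div_le_one hb0]; exact hcb
        nlinarith
      linarith
  _ ≤ _ := mul_le_mul_of_nonneg_left hexp hcard0

set_option maxHeartbeats 1600000 in
theorem stmt7 (b : ℕ) (hb : 2 ≤ b) :
    ∃ c : ℝ, 0 < c ∧
      ∀ (s N d : ℕ) (A : Finset ℕ) (ℓ : ℤ) (ε : ℝ),
        s ≤ b → A ⊆ Finset.range b → A.card = b - s →
        (∃ n, n ∈ A ∧ n + 1 ∈ A) →
        1 < d → (d : ℝ) < (b : ℝ) ^ ((N : ℝ) / 3) →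
        (∀ i : ℕ, 1 ≤ i → ¬ ((d : ℤ) ∣ (b : ℤ) ^ i * ℓ)) →
        |ε| < 1 / (2 * (b : ℝ) ^ (2 * (N : ℝ) / 3)) →
        ‖Chat b A N ((ℓ : ℝ) / (d : ℝ) + ε)‖ ≤
          ((b : ℝ) - s) ^ N * Real.exp (-c * N / Real.log d) := by
  have hb0 : (0:ℝ) < b := by positivity
  have hbn1 : 1 < b := by omega
  have hb1 : (1:ℝ) < b := by exact_mod_cast hbn1
  have hlogb : 0 < Real.log b := Real.log_pos hb1
  have hlog2 : 0 < Real.log 2 := Real.log_pos (by norm_num)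
  set Cb : ℝ := 1/Real.log b + 1/Real.log 2 with hCbdef
  have hCb0 : 0 < Cb := by positivity
  set c : ℝ := min (Real.log 2/(8*(b:ℝ)^7)) (1/(108*(b:ℝ)^3*Cb)) with hcdef
  have hc0 : 0 < c := by
    apply lt_min <;> positivity
  refine ⟨c, hc0, ?_⟩
  rintro s N d A ℓ ε hs hA hcard ⟨a0, ha0, ha1⟩ hd hdN hdvd hε
  have hd0 : (0:ℝ) < d := by
    have : 0 < d := by omega
    exact_mod_cast this
  have hd1 : (1:ℝ) < d := by exact_mod_cast hd
  have hd2 : (2:ℝ) ≤ d := by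
    have : 2 ≤ d := hd
    exact_mod_cast this
  have hlogd : 0 < Real.log d := Real.log_pos hd1
  have hlog2d : Real.log 2 ≤ Real.log d := Real.log_le_log (by norm_num) hd2
  have hN1 : 1 ≤ N := by
    by_contra h
    push_neg at h
    have hN0 : N = 0 := by omega
    subst hN0
    norm_num at hdN
    linarith
  have hcardA : A.card ≤ b := by
    calc A.card ≤ (Finset.range b).card := Finset.card_le_card hA
    _ = b := Finset.card_range b
  have hnd : ∀ i : ℕ, ¬(d:ℤ) ∣ (b:ℤ)^i * ℓ := by
    intro i
    cases i with
    | zero =>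
      intro hc
      have hc' : (d:ℤ) ∣ ℓ := by simpa using hc
      exact hdvd 1 le_rfl (by simpa using hc'.mul_left (b:ℤ))
    | succ i => exact hdvd (i+1) (by omega)
  set x := (ℓ:ℝ)/d + ε with hxdef
  set g : ℕ → ℝ := fun i => nint ((b:ℝ)^i * x) with hgdef
  -- smallness of ε at good scales
  have hεs : ∀ i : ℕ, 3*i + 6 ≤ 2*N → (b:ℝ)^i * |ε| ≤ 1/(4*b) := by
    intro i hi
    have h1 : (b:ℝ)^i * |ε| ≤ (b:ℝ)^i * (1 / (2 * (b:ℝ)^(2*(N:ℝ)/3))) :=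
      mul_le_mul_of_nonneg_left hε.le (by positivity)
    have h2 : (b:ℝ)^i * (1/(2*(b:ℝ)^(2*(N:ℝ)/3))) = ((b:ℝ)^((i:ℝ) - 2*(N:ℝ)/3))/2 := by
      rw [← Real.rpow_natCast (b:ℝ) i, Real.rpow_sub hb0]
      ring
    have h3 : (b:ℝ)^((i:ℝ) - 2*(N:ℝ)/3) ≤ (b:ℝ)^((-2:ℝ)) := by
      apply Real.rpow_le_rpow_of_exponent_le hb1.le
      have h5 : (3:ℝ)*i + 6 ≤ 2*N := by exact_mod_cast hi
      linarith
    have h4 : (b:ℝ)^((-2:ℝ)) = 1/(b:ℝ)^2 := by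
      rw [show ((-2):ℝ) = -((2:ℕ):ℝ) by norm_num, Real.rpow_neg hb0.le, Real.rpow_natCast]
      rw [one_div]
    have h5 : 1/(b:ℝ)^2/2 ≤ 1/(4*b) := by
      have hb2 : (2:ℝ) ≤ b := by exact_mod_cast hb
      rw [div_div, div_le_div_iff₀ (by positivity) (by positivity)]
      nlinarith [mul_le_mul_of_nonneg_left hb2 hb0.le]
    calc (b:ℝ)^i * |ε| ≤ ((b:ℝ)^((i:ℝ) - 2*(N:ℝ)/3))/2 := by rw [← h2]; exact h1
    _ ≤ ((b:ℝ)^((-2:ℝ)))/2 := by linarith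
    _ = 1/(b:ℝ)^2/2 := by rw [h4]
    _ ≤ 1/(4*b) := h5
  -- lower bound on nint at good scales with good rational part
  have hg : ∀ i : ℕ, 3*i+6 ≤ 2*N → 1/(2*(b:ℝ)) ≤ nint ((b:ℝ)^i * ℓ / d) →
      1/(4*(b:ℝ)) ≤ g i := by
    intro i hi hni
    have e1 : (b:ℝ)^i * x = (b:ℝ)^i * ℓ / d + (b:ℝ)^i * ε := by rw [hxdef]; ring
    have h2 := nint_add_ge ((b:ℝ)^i * ℓ / d) ((b:ℝ)^i * ε)
    rw [← e1] at h2
    have h3 : |(b:ℝ)^i * ε| = (b:ℝ)^i * |ε| := by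
      rw [abs_mul, abs_of_pos (by positivity)]
    have h4 := hεs i hi
    have h5 : 1/(2*(b:ℝ)) = 2*(1/(4*b)) := by
      ring
    have h6 : g i = nint ((b:ℝ)^i * x) := rfl
    rw [h6]
    rw [h3] at h2
    linarith
  -- step 1: product bound
  have hchat : ‖Chat b A N x‖ ≤
      (A.card:ℝ)^N * Real.exp (-(4/(b:ℝ)) * ∑ i ∈ Finset.range N, g i^2) := by
    rw [chat_prod b hb A hA N x, norm_prod]
    calc ∏ i ∈ Finset.range N, ‖∑ a ∈ A, e ((a:ℝ)*((b:ℝ)^i*x))‖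
        ≤ ∏ i ∈ Finset.range N, ((A.card:ℝ) * Real.exp (-(4/(b:ℝ)) * g i^2)) := by
          apply Finset.prod_le_prod (fun i _ => norm_nonneg _)
          intro i _
          exact factor_bound b hb A hcardA a0 ha0 ha1 _
    _ = (A.card:ℝ)^N * Real.exp (-(4/(b:ℝ)) * ∑ i ∈ Finset.range N, g i^2) := by
          rw [Finset.prod_mul_distrib, Finset.prod_const, Finset.card_range, ← Real.exp_sum,
            Finset.mul_sum]
  -- step 2: key exponent bound, by cases on N
  have hkey : c * N / Real.log d ≤ (4/(b:ℝ)) * ∑ i ∈ Finset.range N, g i^2 := by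
    rcases le_or_gt N 8 with hN8 | hN9
    · -- small N case : use i = 0
      have hg0 : 1/(2*(d:ℝ)) ≤ nint x := by
        have h1 : (1:ℝ)/d ≤ nint ((ℓ:ℝ)/d) := by
          have h2 := nint_int_div (show (0:ℤ) < d by exact_mod_cast Nat.zero_lt_of_lt hd)
            (show ¬ (d:ℤ) ∣ ℓ by have := hnd 0; simpa using this)
          convert h2 using 2 <;> push_cast <;> ring
        have h2 := nint_add_ge ((ℓ:ℝ)/d) ε
        have h3 : |ε| ≤ 1/(2*(d:ℝ)) := by
          have hA1 : (b:ℝ)^((N:ℝ)/3) ≤ (b:ℝ)^(2*(N:ℝ)/3) := by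
            apply Real.rpow_le_rpow_of_exponent_le hb1.le
            have : (0:ℝ) ≤ (N:ℝ) := Nat.cast_nonneg N
            linarith
          have hA2 : 1/(2*(b:ℝ)^(2*(N:ℝ)/3)) ≤ 1/(2*(b:ℝ)^((N:ℝ)/3)) := by
            apply one_div_le_one_div_of_le (by positivity)
            have hp1 : (0:ℝ) < (b:ℝ)^((N:ℝ)/3) := by positivity
            linarith
          have hA3 : 1/(2*(b:ℝ)^((N:ℝ)/3)) ≤ 1/(2*d) := by
            apply one_div_le_one_div_of_le (by positivity)
            linarith [hdN.le]
          linarith [hε]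
        have h4 : (1:ℝ)/d = 2*(1/(2*d)) := by field_simp
        linarith
      have hsum0 : (1/(2*(d:ℝ)))^2 ≤ ∑ i ∈ Finset.range N, g i^2 := by
        have h1 : (1/(2*(d:ℝ)))^2 ≤ g 0^2 := by
          apply pow_le_pow_left₀ (by positivity)
          show 1/(2*(d:ℝ)) ≤ nint ((b:ℝ)^0 * x)
          simpa using hg0
        exact le_trans h1 (Finset.single_le_sum (fun i _ => sq_nonneg (g i))
          (Finset.mem_range.mpr hN1))
      have hdb3 : (d:ℝ) ≤ (b:ℝ)^3 := by
        have h1 : (b:ℝ)^((N:ℝ)/3) ≤ (b:ℝ)^((3:ℕ):ℝ) := by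
          apply Real.rpow_le_rpow_of_exponent_le hb1.le
          have h2 : (N:ℝ) ≤ 8 := by exact_mod_cast hN8
          norm_num
          linarith
        rw [Real.rpow_natCast] at h1
        linarith
      have hlhs : c * N / Real.log d ≤ 1/(b:ℝ)^7 := by
        have h1 : c * N ≤ Real.log 2 / (b:ℝ)^7 := by
          calc c * N ≤ (Real.log 2/(8*(b:ℝ)^7)) * 8 := by
                apply mul_le_mul (min_le_left _ _) (by exact_mod_cast hN8)
                  (Nat.cast_nonneg N) (by positivity)
          _ = Real.log 2 / (b:ℝ)^7 := by ring
        calc c * N / Real.log d ≤ (Real.log 2 / (b:ℝ)^7) / Real.log 2 := by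
              apply div_le_div₀ (by positivity) h1 hlog2 hlog2d
        _ = 1/(b:ℝ)^7 := by field_simp
      have hrhs : 1/(b:ℝ)^7 ≤ (4/(b:ℝ)) * ∑ i ∈ Finset.range N, g i^2 := by
        have h1 : (4/(b:ℝ)) * (1/(2*(d:ℝ)))^2 = 1/((b:ℝ)*d^2) := by
          field_simp; ring
        have h2 : (1:ℝ)/((b:ℝ)^7) ≤ 1/((b:ℝ)*d^2) := by
          apply one_div_le_one_div_of_le (by positivity)
          have hd6 : (d:ℝ)^2 ≤ ((b:ℝ)^3)^2 := pow_le_pow_left₀ hd0.le hdb3 2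
          calc (b:ℝ)*(d:ℝ)^2 ≤ (b:ℝ)*((b:ℝ)^3)^2 := by
                exact mul_le_mul_of_nonneg_left hd6 hb0.le
          _ = (b:ℝ)^7 := by ring
        calc (1:ℝ)/(b:ℝ)^7 ≤ 1/((b:ℝ)*d^2) := h2
        _ = (4/(b:ℝ)) * (1/(2*(d:ℝ)))^2 := h1.symm
        _ ≤ _ := mul_le_mul_of_nonneg_left hsum0 (by positivity)
      linarith
    · -- large N case : windows
      have hN9' : 9 ≤ N := hN9
      set L : ℕ := Nat.clog b d with hLdef
      have hL1 : 1 ≤ L := Nat.clog_pos hbn1 hd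
      have hLd : d ≤ b^L := Nat.le_pow_clog hbn1 d
      have hL0r : (0:ℝ) < L := by exact_mod_cast hL1
      have hp : b^(L-1) < d := Nat.pow_pred_clog_lt_self hbn1 hd
      have hpr : ((b:ℝ))^((L-1:ℕ)) < d := by exact_mod_cast hp
      have hLub : (L:ℝ) ≤ (N:ℝ)/3 + 1 := by
        have h1 : (b:ℝ)^(((L-1:ℕ)):ℝ) < (b:ℝ)^((N:ℝ)/3) := by
          rw [Real.rpow_natCast]
          linarith
        have h2 : (((L-1:ℕ)):ℝ) < (N:ℝ)/3 := by
          exact (Real.rpow_lt_rpow_left_iff hb1).mp h1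
        have h3 : (((L-1:ℕ)):ℝ) = (L:ℝ) - 1 := by
          have : ((L:ℕ):ℝ) - 1 = ((L - 1 : ℕ):ℝ) := by
            rw [Nat.cast_sub hL1]; norm_num
          linarith [this]
        linarith
      have hLlog : (L:ℝ) ≤ Cb * Real.log d := by
        have h1 : Real.log ((b:ℝ)^(L-1:ℕ)) ≤ Real.log d := by
          apply Real.log_le_log (by positivity) hpr.le
        rw [Real.log_pow] at h1
        have h3 : (((L-1:ℕ)):ℝ) = (L:ℝ) - 1 := by
          rw [Nat.cast_sub hL1]; norm_num
        rw [h3] at h1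
        have h4 : (L:ℝ) - 1 ≤ Real.log d / Real.log b := by
          rw [le_div_iff₀ hlogb]; linarith
        have h5 : (1:ℝ) ≤ Real.log d / Real.log 2 := by
          rw [le_div_iff₀ hlog2]; linarith
        have h6 : Cb * Real.log d = Real.log d / Real.log b + Real.log d / Real.log 2 := by
          rw [hCbdef]; ring
        rw [h6]; linarith
      set K : ℕ := (2*N - 6)/3 with hKdef
      have h3K : 3*K + 6 ≤ 2*N := by omega
      have hKN : K + 1 ≤ N := by omega
      set M : ℕ := (K+1)/L with hMdef
      have hMLK : M*L ≤ K+1 := Nat.div_mul_le_self _ _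
      -- the blocks claim
      have claim : ∀ m : ℕ, m ≤ M →
          (m:ℝ) * (1/(16*(b:ℝ)^2)) ≤ ∑ i ∈ Finset.range (m*L), g i^2 := by
        intro m
        induction m with
        | zero => intro _; simp
        | succ m ih =>
          intro hm
          have hm' : m ≤ M := by omega
          have hmono : m*L ≤ (m+1)*L := Nat.mul_le_mul_right L (Nat.le_succ m)
          have hsplit : ∑ i ∈ Finset.range ((m+1)*L), g i^2
              = ∑ i ∈ Finset.range (m*L), g i^2 + ∑ i ∈ Finset.Ico (m*L) ((m+1)*L), g i^2 := by
            rw [Finset.range_eq_Ico,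
              ← Finset.sum_Ico_consecutive _ (Nat.zero_le (m*L)) hmono, ← Finset.range_eq_Ico]
          obtain ⟨jj, hjjL, hjj⟩ := window_lemma b d hb hd ℓ L hL1 hLd hnd (m*L)
          have hilt : m*L + jj < (m+1)*L := by
            calc m*L + jj < m*L + L := by omega
            _ = (m+1)*L := by ring
          have hiK : m*L + jj ≤ K := by
            have h1 : (m+1)*L ≤ M*L := Nat.mul_le_mul_right L hm
            have h2 : m*L + jj < K+1 := lt_of_lt_of_le hilt (le_trans h1 hMLK)
            exact Nat.lt_succ_iff.mp h2
          have hiN : 3*(m*L+jj)+6 ≤ 2*N := by omega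
          have hgood : 1/(4*(b:ℝ)) ≤ g (m*L+jj) := hg (m*L+jj) hiN hjj
          have hsingle : (1:ℝ)/(16*(b:ℝ)^2) ≤ ∑ i ∈ Finset.Ico (m*L) ((m+1)*L), g i^2 := by
            have hmem : m*L+jj ∈ Finset.Ico (m*L) ((m+1)*L) :=
              Finset.mem_Ico.mpr ⟨Nat.le_add_right _ _, hilt⟩
            calc (1:ℝ)/(16*(b:ℝ)^2) = (1/(4*(b:ℝ)))^2 := by
                  rw [div_pow, one_pow]; congr 1; ring
            _ ≤ g (m*L+jj)^2 := pow_le_pow_left₀ (by positivity) hgood 2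
            _ ≤ _ := Finset.single_le_sum (fun i _ => sq_nonneg (g i)) hmem
          have hih := ih hm'
          rw [hsplit]
          push_cast
          linarith
      have hMN : M*L ≤ N := le_trans hMLK hKN
      have hsumM : (M:ℝ)*(1/(16*(b:ℝ)^2)) ≤ ∑ i ∈ Finset.range N, g i^2 := by
        apply le_trans (claim M le_rfl)
        apply Finset.sum_le_sum_of_subset_of_nonneg
        · exact Finset.range_subset_range.mpr hMN
        · exact fun i _ _ => sq_nonneg (g i)
      -- lower bound on M
      have hKLr : (K:ℝ) + 1 < (M:ℝ)*L + L := by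
        have h := Nat.div_add_mod (K+1) L
        have h2 : (K+1) % L < L := Nat.mod_lt _ (by omega)
        have h3 : K+1 < L*M + L := by
          calc K+1 = L*M + (K+1)%L := h.symm
          _ < L*M + L := Nat.add_lt_add_left h2 _
        have h4 : ((K:ℝ)+1) < (L:ℝ)*M + L := by exact_mod_cast h3
        have h5 : (L:ℝ)*M = (M:ℝ)*L := mul_comm _ _
        linarith [h4, h5]
      have hML2 : ((K:ℝ)+1-(L:ℝ))/(L:ℝ) ≤ (M:ℝ) := by
        rw [div_le_iff₀ hL0r]
        linarith [hKLr]
      have hKlb : ((N:ℝ))/27 ≤ (K:ℝ)+1-(L:ℝ) := by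
        have h3K' : (3:ℝ)*K + 6 ≤ 2*N := by exact_mod_cast h3K
        have hKlow : (2:ℝ)*N ≤ 3*K + 8 := by
          have : 2*N ≤ 3*K + 8 := by omega
          exact_mod_cast this
        have hN9r : (9:ℝ) ≤ N := by exact_mod_cast hN9'
        linarith [hLub]
      have hM3 : (N:ℝ)/(27*(Cb*Real.log d)) ≤ (M:ℝ) := by
        have h1 : (N:ℝ)/(27*(Cb*Real.log d)) ≤ ((K:ℝ)+1-(L:ℝ))/(L:ℝ) := by
          rw [← div_div]
          apply div_le_div₀ (by linarith [hKlb, Real.log_nonneg hd1.le]) hKlb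
            hL0r hLlog
        linarith
      -- conclude
      have e1 : (4/(b:ℝ)) * ((M:ℝ)*(1/(16*(b:ℝ)^2))) = (M:ℝ)/(4*(b:ℝ)^3) := by
        field_simp; ring
      have h2 : c * N / Real.log d ≤ (M:ℝ)/(4*(b:ℝ)^3) := by
        have hcle : c ≤ 1/(108*(b:ℝ)^3*Cb) := min_le_right _ _
        have h3 : c * N / Real.log d ≤ (1/(108*(b:ℝ)^3*Cb)) * N / Real.log d := by
          apply div_le_div_of_nonneg_right ?_ hlogd.le
          · exact mul_le_mul_of_nonneg_right hcle (Nat.cast_nonneg N)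
        have e2 : (1/(108*(b:ℝ)^3*Cb)) * (N:ℝ) / Real.log d
            = (N:ℝ)/(108*(b:ℝ)^3*Cb*Real.log d) := by
          rw [one_div_mul_eq_div, div_div]
        have e3 : (1/(4*(b:ℝ)^3)) * ((N:ℝ)/(27*(Cb*Real.log d)))
            = (N:ℝ)/(108*(b:ℝ)^3*Cb*Real.log d) := by
          rw [mul_comm, div_mul_div_comm, mul_one]
          congr 1
          ring
        have h4 : (1/(108*(b:ℝ)^3*Cb)) * N / Real.log d
            = (1/(4*(b:ℝ)^3)) * ((N:ℝ)/(27*(Cb*Real.log d))) := e2.trans e3.symm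
        have h5 : (1/(4*(b:ℝ)^3)) * ((N:ℝ)/(27*(Cb*Real.log d)))
            ≤ (1/(4*(b:ℝ)^3)) * (M:ℝ) :=
          mul_le_mul_of_nonneg_left hM3 (by positivity)
        calc c * N / Real.log d ≤ (1/(108*(b:ℝ)^3*Cb)) * N / Real.log d := h3
        _ = (1/(4*(b:ℝ)^3)) * ((N:ℝ)/(27*(Cb*Real.log d))) := h4
        _ ≤ (1/(4*(b:ℝ)^3)) * (M:ℝ) := h5
        _ = (M:ℝ)/(4*(b:ℝ)^3) := by ring
      calc c * N / Real.log d ≤ (M:ℝ)/(4*(b:ℝ)^3) := h2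
      _ = (4/(b:ℝ)) * ((M:ℝ)*(1/(16*(b:ℝ)^2))) := e1.symm
      _ ≤ _ := mul_le_mul_of_nonneg_left hsumM (by positivity)
  -- finish
  have hcardcast : (A.card : ℝ) = (b:ℝ) - s := by
    rw [hcard, Nat.cast_sub hs]
  have hbs0 : (0:ℝ) ≤ (b:ℝ) - s := by
    rw [← hcardcast]; positivity
  calc ‖Chat b A N x‖
      ≤ (A.card:ℝ)^N * Real.exp (-(4/(b:ℝ)) * ∑ i ∈ Finset.range N, g i^2) := hchat
  _ ≤ ((b:ℝ) - s)^N * Real.exp (-c * N / Real.log d) := by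
      rw [hcardcast]
      apply mul_le_mul_of_nonneg_left _ (pow_nonneg hbs0 N)
      apply Real.exp_le_exp.mpr
      have : -c * (N:ℝ) / Real.log d = -(c * N / Real.log d) := by ring
      rw [this]
      linarith [hkey]
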